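/- Assume d is prime. Then for every Ω ⊂ ℤ_d with |Ω| = L and every circular convolution operator A ∈ 𝒜_L, the family Y = {e_i, A e_i, …, A^{N_A−1} e_i : i ∈ Ω} is a frame for ℓ²(ℤ_d). -/

import Mathlib

open Matrix

/-- Unnormalized discrete Fourier transform of `a : ZMod d → ℂ`. -/
noncomputable def hatKer (d : ℕ) [NeZero d] (a : ZMod d → ℂ) : ZMod d → ℂ :=
  fun j => ∑ k : ZMod d,
    a k * Complex.exp (-(2 * (Real.pi : ℂ) * Complex.I) * ((j.val : ℂ) * (k.val : ℂ)) / (d : ℂ))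

/-- The circular convolution operator with kernel `a`, as a matrix. -/
def convMat (d : ℕ) (a : ZMod d → ℂ) : Matrix (ZMod d) (ZMod d) ℂ :=
  Matrix.of fun k i => a (k - i)

/-- The normalized discrete Fourier matrix `F_d`. -/
noncomputable def FdMat (d : ℕ) : Matrix (ZMod d) (ZMod d) ℂ :=
  Matrix.of fun j k =>
    ((Real.sqrt d : ℝ) : ℂ)⁻¹ *
      Complex.exp (-(2 * (Real.pi : ℂ) * Complex.I) * ((j.val : ℂ) * (k.val : ℂ)) / (d : ℂ))

/-- The largest geometric multiplicity of an eigenvalue of `diag b`, i.e. the size of the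
largest level set of `b`. -/
noncomputable def maxMult (d : ℕ) [NeZero d] (b : ZMod d → ℂ) : ℕ :=
  Finset.univ.sup fun j : ZMod d => Nat.card {t : ZMod d | b t = b j}

/-- The number of distinct eigenvalues of `diag b`. -/
noncomputable def numEig (d : ℕ) [NeZero d] (b : ZMod d → ℂ) : ℕ :=
  Nat.card (Set.range b)

section Cheb
open Polynomial

lemma fewTerms (p : ℕ) [Fact (Nat.Prime p)] :
    ∀ (n : ℕ) (g : Polynomial (ZMod p)), g ≠ 0 → g.natDegree < p →
      g.support.card ≤ n → ¬ ((X - C 1 : Polynomial (ZMod p)) ^ n ∣ g) := by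
  intro n
  induction n with
  | zero =>
    intro g hg _ hcard _
    exact hg (Polynomial.support_eq_empty.mp (Finset.card_eq_zero.mp (le_antisymm hcard (Nat.zero_le _))))
  | succ n ih =>
    intro g hg hdeg hcard hdvd
    obtain ⟨g₁, hg₁⟩ : (X : Polynomial (ZMod p)) ^ g.natTrailingDegree ∣ g :=
      Polynomial.X_pow_dvd_iff.mpr fun d hd => Polynomial.coeff_eq_zero_of_lt_natTrailingDegree hd
    set m := g.natTrailingDegree with hm
    have hg₁ne : g₁ ≠ 0 := by rintro rfl; rw [mul_zero] at hg₁; exact hg hg₁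
    have hc0 : g₁.coeff 0 ≠ 0 := by
      have h2 : g.coeff (0 + m) = g₁.coeff 0 := by rw [hg₁, Polynomial.coeff_X_pow_mul]
      rw [zero_add] at h2
      rw [← h2]
      exact Polynomial.trailingCoeff_nonzero_iff_nonzero.mpr hg
    have hdeg₁ : g₁.natDegree < p := by
      have : g₁.natDegree ≤ g.natDegree := by
        rw [hg₁, Polynomial.natDegree_mul (pow_ne_zero _ Polynomial.X_ne_zero) hg₁ne]
        · omega
      omega
    have hcard₁ : g₁.support.card ≤ n + 1 := by
      refine le_trans (Finset.card_le_card_of_injOn (· + m) ?_ ?_) hcard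
      · intro j hj
        simp only [Finset.mem_coe] at hj ⊢
        rw [Polynomial.mem_support_iff] at hj ⊢
        rwa [hg₁, Polynomial.coeff_X_pow_mul]
      · intro x _ y _ h; simpa using h
    have hdvd₁ : (X - C 1 : Polynomial (ZMod p)) ^ (n+1) ∣ g₁ := by
      have hprime : Prime (X - C (1 : ZMod p)) := Polynomial.prime_X_sub_C 1
      refine hprime.pow_dvd_of_dvd_mul_left _ ?_ (hg₁ ▸ hdvd)
      intro hdd
      have := Polynomial.eval_dvd (x := (1 : ZMod p)) hdd
      simp at this
    have hndeg₁ : g₁.natDegree ≠ 0 := by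
      intro h0
      have := Polynomial.eq_zero_of_dvd_of_natDegree_lt hdvd₁ (by
        rw [Polynomial.natDegree_pow, Polynomial.natDegree_X_sub_C, h0]; omega)
      exact hg₁ne this
    -- derivative
    set h := derivative g₁ with hh
    have hdvdh : (X - C 1 : Polynomial (ZMod p)) ^ n ∣ h := by
      obtain ⟨w, hw⟩ := hdvd₁
      rw [hh, hw]
      rw [Polynomial.derivative_mul, Polynomial.derivative_pow]
      simp only [Polynomial.derivative_sub, Polynomial.derivative_X, Polynomial.derivative_C,
        sub_zero, mul_one, Nat.add_sub_cancel]
      refine dvd_add ?_ ((pow_dvd_pow _ (Nat.le_succ n)).mul_right _)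
      exact ((dvd_refl ((X - C (1:ZMod p))^n)).mul_left _).mul_right _
    have hcoeffh : ∀ j, h.coeff j = g₁.coeff (j+1) * ((j+1 : ℕ) : ZMod p) := by
      intro j
      have := Polynomial.coeff_derivative g₁ j
      rw [hh, this]
      push_cast
      ring
    have hhne : h ≠ 0 := by
      intro h0
      have hc := hcoeffh (g₁.natDegree - 1)
      rw [h0] at hc
      have harith : g₁.natDegree - 1 + 1 = g₁.natDegree := by omega
      rw [harith] at hc
      have hlc : g₁.coeff g₁.natDegree ≠ 0 := by
        rw [← Polynomial.leadingCoeff]; exact Polynomial.leadingCoeff_ne_zero.mpr hg₁ne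
      have hna : ((g₁.natDegree : ℕ) : ZMod p) ≠ 0 := by
        rw [Ne, ZMod.natCast_eq_zero_iff]
        intro hdvdp
        have := Nat.le_of_dvd (by omega) hdvdp
        omega
      exact hna (by
        have := mul_eq_zero.mp hc.symm
        tauto)
    have hcardh : h.support.card ≤ n := by
      have hsub : h.support ⊆ (g₁.support.erase 0).image (· - 1) := by
        intro j hj
        rw [Polynomial.mem_support_iff] at hj
        have : g₁.coeff (j+1) ≠ 0 := by
          intro h0; rw [hcoeffh j, h0, zero_mul] at hj; exact hj rfl
        refine Finset.mem_image.mpr ⟨j+1, Finset.mem_erase.mpr ⟨by omega, Polynomial.mem_support_iff.mpr this⟩, by omega⟩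
      have h0mem : (0 : ℕ) ∈ g₁.support := Polynomial.mem_support_iff.mpr hc0
      calc h.support.card ≤ ((g₁.support.erase 0).image (· - 1)).card := Finset.card_le_card hsub
        _ ≤ (g₁.support.erase 0).card := Finset.card_image_le
        _ = g₁.support.card - 1 := Finset.card_erase_of_mem h0mem
        _ ≤ n := by omega
    have hdegh : h.natDegree < p :=
      lt_of_lt_of_le (Polynomial.natDegree_derivative_lt hndeg₁) (le_of_lt hdeg₁)
    exact ih h hhne hdegh hcardh hdvdh


theorem cheb {p : ℕ} (hp : Nat.Prime p) {ζ : ℂ} (hζ : IsPrimitiveRoot ζ p)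
    (S T : Finset (ZMod p)) (hcard : S.card = T.card) (v : ZMod p → ℂ)
    (hv : ∀ i ∈ T, ∑ j ∈ S, v j * ζ ^ (j.val * i.val) = 0) :
    ∀ j ∈ S, v j = 0 := by
  haveI : Fact (Nat.Prime p) := ⟨hp⟩
  haveI : NeZero p := ⟨hp.ne_zero⟩
  classical
  by_contra hcon
  push_neg at hcon
  obtain ⟨j₀, hj₀S, hj₀⟩ := hcon
  set R := AdjoinRoot (cyclotomic p ℤ) with hR
  set r : R := AdjoinRoot.root _ with hrdef
  have hpos : 0 < p := hp.pos
  -- the map to ℂ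
  have hev : (cyclotomic p ℤ).eval₂ (Int.castRingHom ℂ) ζ = 0 := by
    rw [Polynomial.eval₂_eq_eval_map, Polynomial.map_cyclotomic_int]
    exact hζ.isRoot_cyclotomic hpos
  set φ : R →+* ℂ := AdjoinRoot.lift (Int.castRingHom ℂ) ζ hev with hφ
  have φroot : φ r = ζ := AdjoinRoot.lift_root hev
  have φinj : Function.Injective φ := by
    rw [injective_iff_map_eq_zero]
    intro x hx
    obtain ⟨Q, rfl⟩ := AdjoinRoot.mk_surjective x
    rw [hφ, AdjoinRoot.lift_mk] at hx
    have hxQ : Polynomial.aeval ζ (Q.map (Int.castRingHom ℚ)) = 0 := by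
      rw [Polynomial.aeval_def, Polynomial.eval₂_eq_eval_map, Polynomial.map_map]
      rw [Polynomial.eval₂_eq_eval_map] at hx
      have hcomp : (algebraMap ℚ ℂ).comp (Int.castRingHom ℚ) = Int.castRingHom ℂ := by
        ext1; simp
      rw [hcomp]
      exact hx
    have hdvd : minpoly ℚ ζ ∣ Q.map (Int.castRingHom ℚ) := minpoly.dvd ℚ ζ hxQ
    rw [← Polynomial.cyclotomic_eq_minpoly_rat hζ hpos] at hdvd
    rw [← Polynomial.map_cyclotomic_int p ℚ] at hdvd
    rw [Polynomial.map_dvd_map _ Int.cast_injective (Polynomial.cyclotomic.monic p ℤ)] at hdvd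
    exact AdjoinRoot.mk_eq_zero.mpr hdvd
  haveI : IsDomain R := Function.Injective.isDomain φ φinj
  haveI : IsNoetherianRing R :=
    isNoetherianRing_of_surjective (Polynomial ℤ) R (AdjoinRoot.mk _) AdjoinRoot.mk_surjective
  -- the map to ZMod p
  have hev1 : (cyclotomic p ℤ).eval₂ (Int.castRingHom (ZMod p)) 1 = 0 := by
    rw [Polynomial.eval₂_one_cyclotomic_prime]
    exact_mod_cast ZMod.natCast_self p
  set ψ : R →+* ZMod p := AdjoinRoot.lift (Int.castRingHom (ZMod p)) 1 hev1 with hψ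
  have ψroot : ψ r = 1 := AdjoinRoot.lift_root hev1
  -- the prime element π
  set π : R := 1 - r with hπdef
  have ψπ : ψ π = 0 := by rw [hπdef, _root_.map_sub, _root_.map_one, ψroot, sub_self]
  have hπp : π ∣ (p : R) := by
    have hsum : (∑ i ∈ Finset.range p, r ^ i) = 0 := by
      have hcp : (∑ i ∈ Finset.range p, (Polynomial.X : Polynomial ℤ) ^ i) = cyclotomic p ℤ :=
        (Polynomial.cyclotomic_prime ℤ p).symm
      calc (∑ i ∈ Finset.range p, r ^ i)
          = Polynomial.eval₂ (AdjoinRoot.of (cyclotomic p ℤ)) r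
            (∑ i ∈ Finset.range p, (Polynomial.X : Polynomial ℤ) ^ i) := by
            simp [Polynomial.eval₂_finset_sum]
        _ = Polynomial.eval₂ (AdjoinRoot.of (cyclotomic p ℤ)) r (cyclotomic p ℤ) := by rw [hcp]
        _ = 0 := AdjoinRoot.eval₂_root _
    have hps : (p : R) = ∑ i ∈ Finset.range p, (1 - r ^ i) := by
      rw [Finset.sum_sub_distrib, hsum, sub_zero, Finset.sum_const, Finset.card_range,
        nsmul_eq_mul, mul_one]
    rw [hps]
    refine Finset.dvd_sum fun i _ => ⟨∑ j ∈ Finset.range i, r ^ j, ?_⟩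
    have hg := geom_sum_mul r i
    rw [hπdef]
    linear_combination hg
  have hker : ∀ x : R, ψ x = 0 → π ∣ x := by
    intro x hx
    obtain ⟨Q, rfl⟩ := AdjoinRoot.mk_surjective x
    rw [hψ, AdjoinRoot.lift_mk] at hx
    have h1 : ((Q.eval 1 : ℤ) : ZMod p) = 0 := by
      have h2 := Polynomial.eval₂_hom (Int.castRingHom (ZMod p)) (1 : ℤ) (p := Q)
      rw [_root_.map_one] at h2
      simp only [eq_intCast] at h2
      rw [← h2]
      exact hx
    obtain ⟨t, ht⟩ := (ZMod.intCast_zmod_eq_zero_iff_dvd _ p).mp h1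
    obtain ⟨D, hD⟩ := Polynomial.X_sub_C_dvd_sub_C_eval (a := (1:ℤ)) (p := Q)
    have h4 : π ∣ AdjoinRoot.mk (cyclotomic p ℤ) (Polynomial.C (Q.eval 1)) := by
      rw [AdjoinRoot.mk_C, ht]
      have h5 : (AdjoinRoot.of (cyclotomic p ℤ)) ((p:ℤ) * t)
          = (p : R) * AdjoinRoot.of (cyclotomic p ℤ) t := by
        rw [_root_.map_mul, _root_.map_natCast]
      rw [h5]
      exact hπp.mul_right _
    have h5 : π ∣ AdjoinRoot.mk (cyclotomic p ℤ) Q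
        - AdjoinRoot.mk (cyclotomic p ℤ) (Polynomial.C (Q.eval 1)) := by
      rw [← _root_.map_sub, hD, _root_.map_mul]
      refine Dvd.dvd.mul_right ?_ _
      rw [_root_.map_sub, AdjoinRoot.mk_X, AdjoinRoot.mk_C]
      refine ⟨-1, ?_⟩
      rw [_root_.map_one, hπdef]
      ring
    have h6 := dvd_add h5 h4
    rwa [sub_add_cancel] at h6
  have hπ0 : π ≠ 0 := by
    intro h0
    have : φ π = 0 := by rw [h0, _root_.map_zero]
    rw [hπdef, _root_.map_sub, _root_.map_one, φroot] at this
    have : ζ = 1 := by linear_combination -this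
    exact hζ.ne_one hp.one_lt this
  have hKrull : ∀ x : R, x ≠ 0 → ∃ k, ¬ π ^ k ∣ x := by
    intro x hx
    by_contra hall
    push_neg at hall
    have hπunit : ¬ IsUnit π := by
      intro hu
      have h7 := hu.map ψ
      rw [ψπ] at h7
      exact (not_isUnit_zero : ¬ IsUnit (0 : ZMod p)) h7
    have hne : Ideal.span {π} ≠ (⊤ : Ideal R) := by
      rw [Ne, Ideal.span_singleton_eq_top]; exact hπunit
    have hbot := Ideal.iInf_pow_eq_bot_of_isDomain (I := Ideal.span {π}) hne
    have hmem : x ∈ (⨅ k : ℕ, Ideal.span {π} ^ k) := by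
      rw [Submodule.mem_iInf]
      intro k
      rw [Ideal.span_singleton_pow, Ideal.mem_span_singleton]
      exact hall k
    rw [hbot] at hmem
    exact hx hmem
  -- matrices
  let e : {x // x ∈ S} ≃ {x // x ∈ T} := Finset.equivOfCardEq hcard
  set Mr : Matrix {x // x ∈ S} {x // x ∈ S} R :=
    Matrix.of (fun s1 s2 => r ^ ((s2 : ZMod p).val * ((e s1 : ZMod p)).val)) with hMr
  set Mc : Matrix {x // x ∈ S} {x // x ∈ S} ℂ :=
    Matrix.of (fun s1 s2 => ζ ^ ((s2 : ZMod p).val * ((e s1 : ZMod p)).val)) with hMc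
  have hmap : Mr.map φ = Mc := by
    ext s1 s2
    simp [hMr, hMc, Matrix.map_apply, _root_.map_pow, φroot]
  have hvS : Mc *ᵥ (fun s : {x // x ∈ S} => v (s : ZMod p)) = 0 := by
    funext s1
    have h8 := hv (e s1) (e s1).2
    simp only [Matrix.mulVec, dotProduct, hMc, Matrix.of_apply, Pi.zero_apply]
    calc ∑ s2 : {x // x ∈ S}, ζ ^ ((s2 : ZMod p).val * ((e s1 : ZMod p)).val) * v (s2 : ZMod p)
        = ∑ j ∈ S, v j * ζ ^ (j.val * ((e s1 : ZMod p)).val) := by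
          rw [← Finset.sum_coe_sort S (fun j => v j * ζ ^ (j.val * ((e s1 : ZMod p)).val))]
          exact Finset.sum_congr rfl fun _ _ => mul_comm _ _
      _ = 0 := h8
  have hvne : (fun s : {x // x ∈ S} => v (s : ZMod p)) ≠ 0 := by
    intro h0
    exact hj₀ (congrFun h0 ⟨j₀, hj₀S⟩)
  have hdetc : Mc.det = 0 := Matrix.exists_mulVec_eq_zero_iff.mp ⟨_, hvne, hvS⟩
  have hdetr : Mr.det = 0 := by
    apply φinj
    rw [_root_.map_zero, RingHom.map_det]
    show (Mr.map ⇑φ).det = 0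
    rw [hmap]
    exact hdetc
  obtain ⟨w, hw0, hww⟩ := Matrix.exists_mulVec_eq_zero_iff.mpr hdetr
  obtain ⟨s₁, hs₁⟩ : ∃ s, w s ≠ 0 := by
    by_contra h0; push_neg at h0; exact hw0 (funext h0)
  have hex : ∃ k, ¬ ∀ s : {x // x ∈ S}, π ^ k ∣ w s := by
    obtain ⟨k, hk⟩ := hKrull (w s₁) hs₁
    exact ⟨k, fun h0 => hk (h0 s₁)⟩
  set K := Nat.find hex with hKdef
  have hKspec : ¬ ∀ s, π ^ K ∣ w s := Nat.find_spec hex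
  have hK0 : K ≠ 0 := by
    intro h0
    apply hKspec
    rw [h0]
    intro s
    simpa using one_dvd _
  have hKpred : ∀ s, π ^ (K-1) ∣ w s :=
    not_not.mp (Nat.find_min hex (m := K - 1) (by omega))
  choose u hu using hKpred
  obtain ⟨s₂, hs₂⟩ : ∃ s, ¬ π ∣ u s := by
    by_contra h0
    push_neg at h0
    apply hKspec
    intro s
    obtain ⟨y, hy⟩ := h0 s
    refine ⟨y, ?_⟩
    rw [hu s, hy, ← mul_assoc, ← pow_succ]
    congr 2
    omega
  have hπpow : (π : R) ^ (K-1) ≠ 0 := pow_ne_zero _ hπ0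
  have hueq : ∀ s1, ∑ s2 : {x // x ∈ S},
      r ^ ((s2 : ZMod p).val * ((e s1 : ZMod p)).val) * u s2 = 0 := by
    intro s1
    have h1 := congrFun hww s1
    simp only [Matrix.mulVec, dotProduct, hMr, Matrix.of_apply, Pi.zero_apply] at h1
    have h2 : π ^ (K-1) * (∑ s2 : {x // x ∈ S},
        r ^ ((s2 : ZMod p).val * ((e s1 : ZMod p)).val) * u s2) = 0 := by
      rw [Finset.mul_sum, ← h1]
      exact Finset.sum_congr rfl fun s2 _ => by rw [hu s2]; ring
    rcases mul_eq_zero.mp h2 with h3|h3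
    · exact absurd h3 hπpow
    · exact h3
  -- the polynomial
  set f : Polynomial R := ∑ s ∈ S.attach, Polynomial.C (u s) * Polynomial.X ^ ((s : ZMod p)).val
    with hfdef
  have hcoef : ∀ s : {x // x ∈ S}, f.coeff ((s : ZMod p)).val = u s := by
    intro s
    rw [hfdef, Polynomial.finset_sum_coeff]
    rw [Finset.sum_eq_single s (fun b _ hb => by
        rw [Polynomial.coeff_C_mul, Polynomial.coeff_X_pow,
          if_neg (fun h0 => hb (Subtype.ext (ZMod.val_injective p h0.symm))), mul_zero])
      (fun hs => absurd (Finset.mem_attach S s) hs)]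
    rw [Polynomial.coeff_C_mul, Polynomial.coeff_X_pow, if_pos rfl, mul_one]
  have hfne : f ≠ 0 := by
    intro h0
    apply hs₂
    rw [← hcoef s₂, h0, Polynomial.coeff_zero]
    exact dvd_zero π
  have hfbarne : f.map ψ ≠ 0 := by
    intro h0
    apply hs₂
    apply hker
    have h1 := congrArg (fun q => Polynomial.coeff q ((s₂ : ZMod p)).val) h0
    simpa [Polynomial.coeff_map, hcoef s₂] using h1
  -- roots
  set ms : Multiset R := T.val.map (fun i => r ^ i.val) with hmsdef
  have hmscard : Multiset.card ms = S.card := by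
    rw [hmsdef, Multiset.card_map]
    exact hcard.symm
  have hnodup : ms.Nodup := by
    refine Multiset.Nodup.map_on ?_ T.nodup
    intro x hx y hy hxy
    have h0 : φ (r ^ x.val) = φ (r ^ y.val) := by rw [hxy]
    rw [_root_.map_pow, _root_.map_pow, φroot] at h0
    exact ZMod.val_injective p (hζ.pow_inj (ZMod.val_lt x) (ZMod.val_lt y) h0)
  have hroots : ms ≤ f.roots := by
    rw [Multiset.le_iff_subset hnodup]
    intro x hx
    rw [hmsdef, Multiset.mem_map] at hx
    obtain ⟨i, hiT, rfl⟩ := hx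
    rw [Polynomial.mem_roots hfne]
    obtain ⟨s1, hs1⟩ := e.surjective ⟨i, hiT⟩
    have hval : (e s1 : ZMod p) = i := by rw [hs1]
    rw [Polynomial.IsRoot, hfdef, Polynomial.eval_finset_sum]
    simp only [Polynomial.eval_mul, Polynomial.eval_C, Polynomial.eval_pow, Polynomial.eval_X]
    rw [← hueq s1]
    refine Finset.sum_congr rfl fun s _ => ?_
    rw [← pow_mul, hval, Nat.mul_comm]
    exact mul_comm _ _
  have hdvd : (ms.map (fun a => Polynomial.X - Polynomial.C a)).prod ∣ f :=
    (Multiset.prod_X_sub_C_dvd_iff_le_roots hfne ms).mpr hroots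
  have hdvd2 : ((Polynomial.X - Polynomial.C (1 : ZMod p)) ^ S.card) ∣ f.map ψ := by
    have h1 : ((ms.map (fun a => Polynomial.X - Polynomial.C a)).prod).map ψ
        = ((Polynomial.X - Polynomial.C (1 : ZMod p)) ^ S.card) := by
      rw [Polynomial.map_multiset_prod, Multiset.map_map]
      have h2 : ∀ x ∈ ms, (Polynomial.map ψ ∘ fun a => Polynomial.X - Polynomial.C a) x
          = Polynomial.X - Polynomial.C (1 : ZMod p) := by
        intro x hx
        rw [hmsdef, Multiset.mem_map] at hx
        obtain ⟨i, hiT, rfl⟩ := hx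
        simp [Polynomial.map_sub, _root_.map_pow, ψroot]
      rw [Multiset.map_congr rfl h2, Multiset.map_const', Multiset.prod_replicate, hmscard]
    rw [← h1]
    exact Polynomial.map_dvd ψ hdvd
  have hdeg : (f.map ψ).natDegree < p := by
    have h0 : f.natDegree ≤ p - 1 := by
      rw [hfdef]
      refine Polynomial.natDegree_sum_le_of_forall_le _ _ fun s _ => ?_
      refine le_trans (Polynomial.natDegree_C_mul_X_pow_le _ _) ?_
      have := ZMod.val_lt (s : ZMod p)
      omega
    have h1 : (f.map ψ).natDegree ≤ f.natDegree := Polynomial.natDegree_map_le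
    omega
  have hsupp : (f.map ψ).support.card ≤ S.card := by
    have h0 : (f.map ψ).support ⊆ S.image (fun j => j.val) := by
      intro k hk
      rw [Polynomial.mem_support_iff, Polynomial.coeff_map] at hk
      have h1 : f.coeff k ≠ 0 := fun h2 => hk (by rw [h2, _root_.map_zero])
      rw [hfdef, Polynomial.finset_sum_coeff] at h1
      obtain ⟨s, _, hs⟩ := Finset.exists_ne_zero_of_sum_ne_zero h1
      rw [Polynomial.coeff_C_mul, Polynomial.coeff_X_pow] at hs
      have h3 : k = (s : ZMod p).val := by
        by_contra h2
        rw [if_neg h2, mul_zero] at hs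
        exact hs rfl
      rw [h3]
      exact Finset.mem_image.mpr ⟨s, s.2, rfl⟩
    calc (f.map ψ).support.card ≤ (S.image (fun j => j.val)).card := Finset.card_le_card h0
      _ ≤ S.card := Finset.card_image_le
  exact fewTerms p S.card (f.map ψ) hfbarne hdeg hsupp hdvd2

end Cheb

/-- if `d` is prime, then for every `Ω ⊂ ℤ_d` with `|Ω| = L` and every
circular convolution operator `A ∈ 𝒜_L`, the family `Y = {A^n e_i : i ∈ Ω, n ≤ N_A - 1}`
is a frame for `ℓ²(ℤ_d)`. -/
theorem stmt7 (d : ℕ) [NeZero d] (hp : Nat.Prime d) (L : ℕ) (Ω : Finset (ZMod d))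
    (hΩ : Ω.card = L) (a : ZMod d → ℂ) (hA : maxMult d (hatKer d a) = L) :
    Submodule.span ℂ {v : ZMod d → ℂ | ∃ i ∈ Ω, ∃ n < numEig d (hatKer d a),
        v = (convMat d a) ^ n *ᵥ (Pi.single i 1 : ZMod d → ℂ)} = ⊤ := by
  haveI hfact : Fact (Nat.Prime d) := ⟨hp⟩
  classical
  by_contra hspan
  set ζ : ℂ := Complex.exp (-(2 * (Real.pi : ℂ) * Complex.I) / d) with hζdef
  have hζ : IsPrimitiveRoot ζ d := by
    have h1 := Complex.isPrimitiveRoot_exp d (NeZero.ne d)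
    have h2 : ζ = (Complex.exp (2 * (Real.pi : ℂ) * Complex.I / d))⁻¹ := by
      rw [hζdef, ← Complex.exp_neg]
      congr 1
      ring
    rw [h2]
    exact h1.inv
  have hζd : ζ ^ d = 1 := hζ.pow_eq_one
  have hpowmod : ∀ x : ℕ, ζ ^ x = ζ ^ (x % d) := by
    intro x
    conv_lhs => rw [← Nat.div_add_mod x d]
    rw [pow_add, pow_mul, hζd, one_pow, one_mul]
  have hcong : ∀ x y : ℕ, x % d = y % d → ζ ^ x = ζ ^ y := by
    intro x y hxy
    rw [hpowmod x, hpowmod y, hxy]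
  set b : ZMod d → ℂ := hatKer d a with hbdef
  have hexp : ∀ (j k : ZMod d),
      Complex.exp (-(2 * (Real.pi : ℂ) * Complex.I) * ((j.val : ℂ) * (k.val : ℂ)) / (d : ℂ))
        = ζ ^ (j.val * k.val) := by
    intro j k
    rw [hζdef, ← Complex.exp_nat_mul]
    congr 1
    push_cast
    ring
  have hhat : ∀ j, b j = ∑ k, a k * ζ ^ (j.val * k.val) := by
    intro j
    rw [hbdef]
    unfold hatKer
    exact Finset.sum_congr rfl fun k _ => by rw [hexp j k]
  set A : Matrix (ZMod d) (ZMod d) ℂ := convMat d a with hAdef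
  -- one step of vecMul by a character
  have hstep : ∀ j : ZMod d,
      (fun k => ζ ^ (j.val * k.val)) ᵥ* A = fun i => b j * ζ ^ (j.val * i.val) := by
    intro j
    funext i
    simp only [Matrix.vecMul, dotProduct, hAdef, convMat, Matrix.of_apply]
    calc ∑ k, ζ ^ (j.val * k.val) * a (k - i)
        = ∑ m, ζ ^ (j.val * ((m + i) : ZMod d).val) * a m := by
          rw [← Equiv.sum_comp (Equiv.addRight i)
            (fun k => ζ ^ (j.val * k.val) * a (k - i))]
          refine Finset.sum_congr rfl fun m _ => ?_
          simp [Equiv.coe_addRight, add_sub_cancel_right]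
      _ = ∑ m, (ζ ^ (j.val * m.val) * a m) * ζ ^ (j.val * i.val) := by
          refine Finset.sum_congr rfl fun m _ => ?_
          have h2 : ζ ^ (j.val * ((m + i) : ZMod d).val)
              = ζ ^ (j.val * m.val) * ζ ^ (j.val * i.val) := by
            rw [← pow_add, ← Nat.mul_add]
            apply hcong
            have h3 : ((m + i) : ZMod d).val % d = (m.val + i.val) % d := by
              rw [ZMod.val_add, Nat.mod_mod_of_dvd _ dvd_rfl]
            rw [Nat.mul_mod, h3, ← Nat.mul_mod]
          rw [h2]
          ring
      _ = (∑ m, a m * ζ ^ (j.val * m.val)) * ζ ^ (j.val * i.val) := by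
          rw [Finset.sum_mul]
          exact Finset.sum_congr rfl fun m _ => by ring
      _ = b j * ζ ^ (j.val * i.val) := by rw [← hhat j]
  have hvecMul : ∀ (j : ZMod d) (n : ℕ),
      (fun k => ζ ^ (j.val * k.val)) ᵥ* (A ^ n) = fun i => (b j) ^ n * ζ ^ (j.val * i.val) := by
    intro j n
    induction n with
    | zero =>
      rw [pow_zero, Matrix.vecMul_one]
      funext i
      rw [pow_zero, one_mul]
    | succ n ih =>
      rw [pow_succ, ← Matrix.vecMul_vecMul, ih]
      funext i
      calc ((fun i' => (b j) ^ n * ζ ^ (j.val * i'.val)) ᵥ* A) i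
          = (b j) ^ n * (((fun k => ζ ^ (j.val * k.val)) ᵥ* A) i) := by
            simp only [Matrix.vecMul, dotProduct, Finset.mul_sum]
            exact Finset.sum_congr rfl fun k _ => by ring
        _ = (b j) ^ n * (b j * ζ ^ (j.val * i.val)) := by rw [hstep j]
        _ = (b j) ^ (n+1) * ζ ^ (j.val * i.val) := by ring
  -- the character matrix is invertible (special case of cheb)
  set V : Matrix (ZMod d) (ZMod d) ℂ := Matrix.of (fun k j => ζ ^ (j.val * k.val)) with hVdef
  have hdetV : V.det ≠ 0 := by
    intro h0
    obtain ⟨c, hcne, hc0⟩ := Matrix.exists_mulVec_eq_zero_iff.mpr h0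
    have hall := cheb hp hζ Finset.univ Finset.univ rfl c (fun i _ => by
      have h1 := congrFun hc0 i
      simp only [Matrix.mulVec, dotProduct, hVdef, Matrix.of_apply, Pi.zero_apply] at h1
      rw [← h1]
      exact Finset.sum_congr rfl fun j _ => mul_comm _ _)
    apply hcne
    funext j
    exact hall j (Finset.mem_univ j)
  -- dual functional
  have hlt : Submodule.span ℂ {v : ZMod d → ℂ | ∃ i ∈ Ω, ∃ n < numEig d b,
      v = A ^ n *ᵥ (Pi.single i 1 : ZMod d → ℂ)} < ⊤ := lt_top_iff_ne_top.mpr hspan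
  obtain ⟨ϕ, hϕne, hϕmap⟩ := Submodule.exists_dual_map_eq_bot_of_lt_top hlt inferInstance
  set g : ZMod d → ℂ := fun k => ϕ (Pi.single k 1) with hgdef
  have hϕ_eq : ∀ v : ZMod d → ℂ, ϕ v = ∑ k, v k * g k := by
    intro v
    have hv : v = ∑ k, v k • (Pi.single k 1 : ZMod d → ℂ) := by
      funext k'
      rw [Finset.sum_apply]
      simp [Pi.single_apply]
    conv_lhs => rw [hv]
    rw [map_sum]
    exact Finset.sum_congr rfl fun k _ => by rw [_root_.map_smul, hgdef, smul_eq_mul]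
  have hgne : g ≠ 0 := by
    intro h0
    apply hϕne
    apply LinearMap.ext
    intro v
    have h1 := hϕ_eq v
    rw [h0] at h1
    simpa using h1
  have hcond : ∀ i ∈ Ω, ∀ n < numEig d b, ∑ k, g k * (A ^ n) k i = 0 := by
    intro i hi n hn
    have hmem : A ^ n *ᵥ (Pi.single i 1 : ZMod d → ℂ) ∈ Submodule.span ℂ
        {v : ZMod d → ℂ | ∃ i ∈ Ω, ∃ n < numEig d b,
          v = A ^ n *ᵥ (Pi.single i 1 : ZMod d → ℂ)} :=
      Submodule.subset_span ⟨i, hi, n, hn, rfl⟩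
    have h1 : ϕ (A ^ n *ᵥ (Pi.single i 1 : ZMod d → ℂ)) = 0 := by
      have h2 := Submodule.mem_map_of_mem (f := ϕ) hmem
      rw [hϕmap] at h2
      exact (Submodule.mem_bot ℂ).mp h2
    rw [hϕ_eq] at h1
    rw [← h1]
    refine Finset.sum_congr rfl fun k _ => ?_
    rw [Matrix.mulVec_single_one, Matrix.col_apply]
    ring
  -- expand g in characters
  have hVunit : IsUnit V.det := isUnit_iff_ne_zero.mpr hdetV
  set c : ZMod d → ℂ := V⁻¹ *ᵥ g with hcdef
  have hgc : g = V *ᵥ c := by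
    rw [hcdef, Matrix.mulVec_mulVec, Matrix.mul_nonsing_inv _ hVunit, Matrix.one_mulVec]
  have hgk : ∀ k, g k = ∑ j, ζ ^ (j.val * k.val) * c j := by
    intro k
    have h1 := congrFun hgc k
    rw [h1]
    simp only [Matrix.mulVec, dotProduct, hVdef, Matrix.of_apply]
  have hkey : ∀ i ∈ Ω, ∀ n < numEig d b,
      ∑ j, c j * ((b j) ^ n * ζ ^ (j.val * i.val)) = 0 := by
    intro i hi n hn
    have h1 := hcond i hi n hn
    calc ∑ j, c j * ((b j) ^ n * ζ ^ (j.val * i.val))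
        = ∑ j, c j * (((fun k => ζ ^ (j.val * k.val)) ᵥ* (A ^ n)) i) := by
          refine Finset.sum_congr rfl fun j _ => ?_
          rw [hvecMul j n]
      _ = ∑ j, c j * (∑ k, ζ ^ (j.val * k.val) * (A ^ n) k i) := by
          refine Finset.sum_congr rfl fun j _ => ?_
          simp only [Matrix.vecMul, dotProduct]
      _ = ∑ k, (∑ j, ζ ^ (j.val * k.val) * c j) * (A ^ n) k i := by
          simp_rw [Finset.mul_sum, Finset.sum_mul]
          rw [Finset.sum_comm]
          exact Finset.sum_congr rfl fun k _ => Finset.sum_congr rfl fun j _ => by ring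
      _ = ∑ k, g k * (A ^ n) k i := by
          refine Finset.sum_congr rfl fun k _ => ?_
          rw [← hgk k]
      _ = 0 := h1
  -- group by eigenvalue
  set T' : Finset ℂ := Finset.image b Finset.univ with hT'def
  have hNT : T'.card = numEig d b := by
    have h1 : Set.range b = ↑T' := by
      rw [hT'def, Finset.coe_image, Finset.coe_univ, Set.image_univ]
    have h2 : numEig d b = Nat.card ↥((↑T' : Set ℂ)) := by
      rw [show numEig d b = Nat.card (Set.range b) from rfl, h1]
    rw [h2, Nat.card_coe_set_eq, Set.ncard_coe_finset]
  have hW : ∀ i ∈ Ω, ∀ μ ∈ T',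
      ∑ j ∈ Finset.univ.filter (fun t => b t = μ), c j * ζ ^ (j.val * i.val) = 0 := by
    intro i hi
    set eT := T'.equivFin with heTdef
    set node : Fin T'.card → ℂ := fun t => ((eT.symm t : ↥T') : ℂ) with hnodedef
    have hnodeinj : Function.Injective node := fun t1 t2 h12 =>
      eT.symm.injective (Subtype.coe_injective h12)
    set P : Matrix (Fin T'.card) (Fin T'.card) ℂ :=
      Matrix.of (fun n t => node t ^ (n : ℕ)) with hPdef
    have hdetP : P.det ≠ 0 := by
      have h1 : P = (Matrix.vandermonde node)ᵀ := by
        ext n t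
        simp [hPdef, Matrix.vandermonde, Matrix.transpose_apply]
      rw [h1, Matrix.det_transpose, Matrix.det_vandermonde]
      refine Finset.prod_ne_zero_iff.mpr fun i' _ => Finset.prod_ne_zero_iff.mpr fun j' hj' => ?_
      rw [sub_ne_zero]
      intro h2
      have h3 := hnodeinj h2
      rw [Finset.mem_Ioi] at hj'
      exact absurd h3 (ne_of_gt hj')
    set wv : Fin T'.card → ℂ :=
      fun t => ∑ j ∈ Finset.univ.filter (fun x => b x = node t), c j * ζ ^ (j.val * i.val)
      with hwvdef
    have hPw : P *ᵥ wv = 0 := by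
      funext n
      simp only [Matrix.mulVec, dotProduct, hPdef, Matrix.of_apply, Pi.zero_apply, hwvdef]
      have h1 : ∑ t, node t ^ (n : ℕ) *
          (∑ j ∈ Finset.univ.filter (fun x => b x = node t), c j * ζ ^ (j.val * i.val))
          = ∑ j, c j * ((b j) ^ (n : ℕ) * ζ ^ (j.val * i.val)) := by
        calc ∑ t, node t ^ (n : ℕ) *
            (∑ j ∈ Finset.univ.filter (fun x => b x = node t), c j * ζ ^ (j.val * i.val))
            = ∑ μ ∈ T', μ ^ (n : ℕ) *
              (∑ j ∈ Finset.univ.filter (fun x => b x = μ), c j * ζ ^ (j.val * i.val)) := by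
              rw [← Finset.sum_coe_sort T' (fun μ => μ ^ (n : ℕ) *
                (∑ j ∈ Finset.univ.filter (fun x => b x = μ), c j * ζ ^ (j.val * i.val)))]
              rw [← Equiv.sum_comp eT.symm (fun x : ↥T' => (x : ℂ) ^ (n : ℕ) *
                (∑ j ∈ Finset.univ.filter (fun t => b t = (x : ℂ)), c j * ζ ^ (j.val * i.val)))]
          _ = ∑ μ ∈ T', ∑ j ∈ Finset.univ.filter (fun x => b x = μ),
                (b j) ^ (n : ℕ) * (c j * ζ ^ (j.val * i.val)) := by
              refine Finset.sum_congr rfl fun μ hμ => ?_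
              rw [Finset.mul_sum]
              refine Finset.sum_congr rfl fun j hj => ?_
              rw [(Finset.mem_filter.mp hj).2]
          _ = ∑ j, (b j) ^ (n : ℕ) * (c j * ζ ^ (j.val * i.val)) :=
              Finset.sum_fiberwise_of_maps_to
                (fun j _ => Finset.mem_image_of_mem b (Finset.mem_univ j)) _
          _ = ∑ j, c j * ((b j) ^ (n : ℕ) * ζ ^ (j.val * i.val)) :=
              Finset.sum_congr rfl fun j _ => by ring
      rw [h1]
      exact hkey i hi (n : ℕ) (by rw [← hNT]; exact n.2)
    have hwv0 : wv = 0 := by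
      have h2 : P⁻¹ *ᵥ (P *ᵥ wv) = wv := by
        rw [Matrix.mulVec_mulVec, Matrix.nonsing_inv_mul _ (isUnit_iff_ne_zero.mpr hdetP),
          Matrix.one_mulVec]
      rw [hPw, Matrix.mulVec_zero] at h2
      exact h2.symm
    intro μ hμ
    have h3 : wv (eT ⟨μ, hμ⟩) = 0 := by rw [hwv0]; rfl
    have h4 : node (eT ⟨μ, hμ⟩) = μ := by
      rw [hnodedef]
      simp only [Equiv.symm_apply_apply]
    rw [hwvdef] at h3
    simp only [h4] at h3
    exact h3
  -- apply Chebotarev on each level set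
  have hczero : ∀ j₀ : ZMod d, c j₀ = 0 := by
    intro j₀
    set S0 : Finset (ZMod d) := Finset.univ.filter (fun t => b t = b j₀) with hS0def
    have hS0card : S0.card ≤ L := by
      rw [← hA]
      have h1 : Nat.card {t : ZMod d | b t = b j₀} = S0.card := by
        rw [Nat.card_eq_fintype_card]
        exact Fintype.card_subtype _
      calc S0.card = Nat.card {t : ZMod d | b t = b j₀} := h1.symm
        _ ≤ maxMult d b :=
            Finset.le_sup (f := fun j => Nat.card {t : ZMod d | b t = b j}) (Finset.mem_univ j₀)
    obtain ⟨Ω', hΩ'sub, hΩ'card⟩ := Finset.exists_subset_card_eq (s := Ω) (n := S0.card) (by rw [hΩ]; exact hS0card)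
    have happ := cheb hp hζ S0 Ω' hΩ'card.symm c (fun i hi => by
      have h5 := hW i (hΩ'sub hi) (b j₀) (Finset.mem_image_of_mem b (Finset.mem_univ j₀))
      exact h5)
    exact happ j₀ (by rw [hS0def]; simp)
  apply hgne
  rw [hgc, show c = 0 from funext hczero, Matrix.mulVec_zero]
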